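/- For any two density matrices ρ_A on H_A and ρ_B on H_B, neither of which is pure, there exists a density matrix σ on H_A⊗H_B with tr_B(σ) = ρ_A, tr_A(σ) = ρ_B, and σ ≠ ρ_A⊗ρ_B. -/

import Mathlib

open Matrix Kronecker ComplexOrder

noncomputable def trA {m n : Type*} [Fintype m] (M : Matrix (m × n) (m × n) ℂ) :
    Matrix n n ℂ :=
  fun i j => ∑ k, M (k, i) (k, j)

noncomputable def trB {m n : Type*} [Fintype n] (M : Matrix (m × n) (m × n) ℂ) :
    Matrix m m ℂ :=
  fun i j => ∑ k, M (i, k) (j, k)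

def IsDensity {m : Type*} [Fintype m] (ρ : Matrix m m ℂ) : Prop :=
  ρ.PosSemidef ∧ ρ.trace = 1

/-- A pure density matrix: a rank-one projector onto a unit vector. -/
def IsPure {m : Type*} [Fintype m] (ρ : Matrix m m ℂ) : Prop :=
  ∃ ψ : m → ℂ, star ψ ⬝ᵥ ψ = 1 ∧ ρ = vecMulVec ψ (star ψ)

set_option linter.unusedSectionVars false

section QHaux
variable {d : Type*} [Fintype d] [DecidableEq d]

noncomputable def col' {ρ : Matrix d d ℂ} (hρ : ρ.IsHermitian) (i : d) : d → ℂ :=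
  fun j => (hρ.eigenvectorUnitary : Matrix d d ℂ) j i

lemma ortho_col {ρ : Matrix d d ℂ} (hρ : ρ.IsHermitian) (i i' : d) :
    star (col' hρ i) ⬝ᵥ col' hρ i' = if i = i' then 1 else 0 := by
  have h : (star (hρ.eigenvectorUnitary : Matrix d d ℂ)) * (hρ.eigenvectorUnitary : Matrix d d ℂ) = 1 :=
    Unitary.coe_star_mul_self hρ.eigenvectorUnitary
  have := congrFun (congrFun h i) i'
  simpa [Matrix.mul_apply, Matrix.one_apply, dotProduct, col', conjTranspose_apply] using this

lemma spectral_sum {ρ : Matrix d d ℂ} (hρ : ρ.IsHermitian) :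
    ρ = ∑ i, (hρ.eigenvalues i : ℂ) • vecMulVec (col' hρ i) (star (col' hρ i)) := by
  conv_lhs => rw [hρ.spectral_theorem]
  ext j k
  simp [Matrix.mul_apply, Matrix.diagonal_apply, vecMulVec_apply, Matrix.sum_apply, col',
    Finset.sum_ite_eq, mul_comm, mul_assoc, mul_left_comm]

lemma trace_outer (v : d → ℂ) : (vecMulVec v (star v)).trace = star v ⬝ᵥ v := by
  simp [Matrix.trace, Matrix.diag, vecMulVec_apply, dotProduct, mul_comm]

lemma eig_sum_one {ρ : Matrix d d ℂ} (h : IsDensity ρ) :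
    ∑ i, h.1.1.eigenvalues i = 1 := by
  have h1 : ρ.trace = ∑ i, (h.1.1.eigenvalues i : ℂ) := by
    conv_lhs => rw [spectral_sum h.1.1]
    rw [Matrix.trace_sum]
    refine Finset.sum_congr rfl fun i _ => ?_
    rw [Matrix.trace_smul, trace_outer, ortho_col]
    simp
  exact_mod_cast (h1.symm.trans h.2)

lemma two_pos_eig {ρ : Matrix d d ℂ} (h : IsDensity ρ) (hp : ¬ IsPure ρ) :
    ∃ i1 i2 : d, i1 ≠ i2 ∧ 0 < h.1.1.eigenvalues i1 ∧ 0 < h.1.1.eigenvalues i2 := by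
  set p := h.1.1.eigenvalues with hpdef
  have hnn : ∀ i, 0 ≤ p i := h.1.eigenvalues_nonneg
  have hsum : ∑ i, p i = 1 := eig_sum_one h
  obtain ⟨i0, -, hi0⟩ : ∃ i ∈ Finset.univ, p i ≠ 0 := by
    by_contra hc
    push_neg at hc
    rw [Finset.sum_eq_zero (fun i hi => hc i hi)] at hsum
    norm_num at hsum
  have hi0pos : 0 < p i0 := lt_of_le_of_ne (hnn i0) (Ne.symm hi0)
  by_contra hc
  push_neg at hc
  have hz : ∀ i, i ≠ i0 → p i = 0 := by
    intro i hi
    exact le_antisymm (hc i0 i (Ne.symm hi) hi0pos) (hnn i)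
  have hp1 : p i0 = 1 := by
    rw [← hsum, Finset.sum_eq_single i0 (fun i _ hi => hz i hi) (by simp)]
  apply hp
  refine ⟨col' h.1.1 i0, by simpa using ortho_col h.1.1 i0 i0, ?_⟩
  have hdecomp := spectral_sum h.1.1
  rw [Finset.sum_eq_single i0 (fun i _ hi => by rw [← hpdef, hz i hi]; simp) (by simp)] at hdecomp
  rw [← hpdef, hp1] at hdecomp
  simpa using hdecomp

lemma sum_mulVec' {ι : Type*} (s : Finset ι) (f : ι → Matrix d d ℂ) (x : d → ℂ) :
    (∑ i ∈ s, f i) *ᵥ x = ∑ i ∈ s, f i *ᵥ x := by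
  ext k
  simp only [mulVec, dotProduct, Matrix.sum_apply, Finset.sum_apply, Finset.sum_mul]
  exact Finset.sum_comm

lemma dot_sum' {ι : Type*} (s : Finset ι) (v : ι → d → ℂ) (x : d → ℂ) :
    x ⬝ᵥ (∑ i ∈ s, v i) = ∑ i ∈ s, x ⬝ᵥ v i := by
  simp only [dotProduct, Finset.sum_apply, Finset.mul_sum]
  exact Finset.sum_comm

lemma qf_sum {ι : Type*} (s : Finset ι) (f : ι → Matrix d d ℂ) (x : d → ℂ) :
    star x ⬝ᵥ (∑ i ∈ s, f i).mulVec x = ∑ i ∈ s, star x ⬝ᵥ (f i).mulVec x := by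
  rw [sum_mulVec', dot_sum']

lemma qf_smul (c : ℂ) (M : Matrix d d ℂ) (x : d → ℂ) :
    star x ⬝ᵥ (c • M).mulVec x = c * (star x ⬝ᵥ M.mulVec x) := by
  rw [smul_mulVec, dotProduct_smul, smul_eq_mul]

lemma outer_mulVec (v w x : d → ℂ) : (vecMulVec v w) *ᵥ x = (w ⬝ᵥ x) • v := by
  ext k
  simp only [mulVec, dotProduct, vecMulVec_apply, Pi.smul_apply, smul_eq_mul, Finset.sum_mul]
  exact Finset.sum_congr rfl fun l _ => by ring

lemma qf_outer (v x : d → ℂ) :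
    star x ⬝ᵥ (vecMulVec v (star v)).mulVec x = (star x ⬝ᵥ v) * (star v ⬝ᵥ x) := by
  rw [outer_mulVec, dotProduct_smul, smul_eq_mul, mul_comm]

lemma star_dot (v x : d → ℂ) : star x ⬝ᵥ v = star (star v ⬝ᵥ x) := by
  simp [dotProduct, star_sum, mul_comm]

lemma herm_outer (v : d → ℂ) : (vecMulVec v (star v)).IsHermitian := by
  ext i j
  simp [Matrix.conjTranspose_apply, vecMulVec_apply, mul_comm]

end QHaux

section QHtens
variable {m n : Type*} [Fintype m] [Fintype n] [DecidableEq m] [DecidableEq n]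

def tens (a : m → ℂ) (b : n → ℂ) : m × n → ℂ := fun kl => a kl.1 * b kl.2

lemma dot_tens (a a' : m → ℂ) (b b' : n → ℂ) :
    star (tens a b) ⬝ᵥ tens a' b' = (star a ⬝ᵥ a') * (star b ⬝ᵥ b') := by
  simp only [dotProduct, tens, Pi.star_apply, star_mul']
  rw [Fintype.sum_mul_sum, Fintype.sum_prod_type]
  refine Finset.sum_congr rfl fun k _ => Finset.sum_congr rfl fun l _ => by ring

lemma trB_sum {ι : Type*} (s : Finset ι) (f : ι → Matrix (m × n) (m × n) ℂ) :
    trB (∑ i ∈ s, f i) = ∑ i ∈ s, trB (f i) := by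
  ext i j
  simp only [trB, Matrix.sum_apply]
  exact Finset.sum_comm

lemma trA_sum {ι : Type*} (s : Finset ι) (f : ι → Matrix (m × n) (m × n) ℂ) :
    trA (∑ i ∈ s, f i) = ∑ i ∈ s, trA (f i) := by
  ext i j
  simp only [trA, Matrix.sum_apply]
  exact Finset.sum_comm

lemma trB_smul (c : ℂ) (M : Matrix (m × n) (m × n) ℂ) : trB (c • M) = c • trB M := by
  ext i j
  simp [trB, Finset.mul_sum]

lemma trA_smul (c : ℂ) (M : Matrix (m × n) (m × n) ℂ) : trA (c • M) = c • trA M := by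
  ext i j
  simp [trA, Finset.mul_sum]

lemma trB_outer (a : m → ℂ) (b : n → ℂ) :
    trB (vecMulVec (tens a b) (star (tens a b))) = (star b ⬝ᵥ b) • vecMulVec a (star a) := by
  ext i j
  simp only [trB, vecMulVec_apply, tens, Pi.star_apply, Matrix.smul_apply, dotProduct,
    smul_eq_mul, star_mul', Finset.sum_mul]
  refine Finset.sum_congr rfl fun k _ => by ring

lemma trA_outer (a : m → ℂ) (b : n → ℂ) :
    trA (vecMulVec (tens a b) (star (tens a b))) = (star a ⬝ᵥ a) • vecMulVec b (star b) := by
  ext i j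
  simp only [trA, vecMulVec_apply, tens, Pi.star_apply, Matrix.smul_apply, dotProduct,
    smul_eq_mul, star_mul', Finset.sum_mul]
  refine Finset.sum_congr rfl fun k _ => by ring

lemma kron_outer (a : m → ℂ) (b : n → ℂ) :
    vecMulVec a (star a) ⊗ₖ vecMulVec b (star b)
      = vecMulVec (tens a b) (star (tens a b)) := by
  ext ⟨i, j⟩ ⟨k, l⟩
  simp only [kroneckerMap_apply, vecMulVec_apply, tens, Pi.star_apply, star_mul']
  ring

lemma kron_sum_sum (c : m → ℂ) (e : n → ℂ) (X : m → Matrix m m ℂ) (Y : n → Matrix n n ℂ) :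
    (∑ i, c i • X i) ⊗ₖ (∑ j, e j • Y j)
      = ∑ i, ∑ j, (c i * e j) • (X i ⊗ₖ Y j) := by
  ext ⟨i, j⟩ ⟨k, l⟩
  simp only [kroneckerMap_apply, Matrix.sum_apply, Matrix.smul_apply, smul_eq_mul,
    Finset.sum_mul_sum]
  refine Finset.sum_congr rfl fun i' _ => Finset.sum_congr rfl fun j' _ => by ring

end QHtens

/-- Key step of Theorem 2 (non-pure implies quantum-house): if neither marginal is
pure, there is a non-product joint state with the given marginals. -/
theorem nonpure_implies_quantum_house {m n : Type*} [Fintype m] [Fintype n]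
    [DecidableEq m] [DecidableEq n]
    (ρA : Matrix m m ℂ) (ρB : Matrix n n ℂ)
    (hA : IsDensity ρA) (hB : IsDensity ρB)
    (hApure : ¬ IsPure ρA) (hBpure : ¬ IsPure ρB) :
    ∃ σ : Matrix (m × n) (m × n) ℂ,
      IsDensity σ ∧ trB σ = ρA ∧ trA σ = ρB ∧ σ ≠ ρA ⊗ₖ ρB := by
  obtain ⟨i1, i2, hii, hpi1, hpi2⟩ := two_pos_eig hA hApure
  obtain ⟨j1, j2, hjj, hqj1, hqj2⟩ := two_pos_eig hB hBpure
  set p : m → ℝ := hA.1.1.eigenvalues with hp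
  set q : n → ℝ := hB.1.1.eigenvalues with hq
  set a : m → m → ℂ := col' hA.1.1 with ha
  set b : n → n → ℂ := col' hB.1.1 with hb
  have hpnn : ∀ i, 0 ≤ p i := hA.1.eigenvalues_nonneg
  have hqnn : ∀ j, 0 ≤ q j := hB.1.eigenvalues_nonneg
  have hpsum : ∑ i, p i = 1 := eig_sum_one hA
  have hqsum : ∑ j, q j = 1 := eig_sum_one hB
  set ε : ℝ := min (p i1) (p i2) * min (q j1) (q j2) with hεdef
  have hε : 0 < ε := mul_pos (lt_min hpi1 hpi2) (lt_min hqj1 hqj2)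
  set c : m → ℝ := fun i => if i = i1 then 1 else if i = i2 then -1 else 0 with hc
  set e : n → ℝ := fun j => if j = j1 then 1 else if j = j2 then -1 else 0 with he
  set r : m → n → ℝ := fun i j => p i * q j + ε * (c i * e j) with hr
  have hcsum : ∑ i, c i = 0 := by
    have h : ∑ i, c i = ∑ i, ((if i = i1 then (1:ℝ) else 0) + (if i = i2 then -1 else 0)) := by
      refine Finset.sum_congr rfl fun i _ => ?_
      rcases eq_or_ne i i1 with h1 | h1 <;> rcases eq_or_ne i i2 with h2 | h2
      · exact absurd (h1.symm.trans h2) hii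
      all_goals simp [hc, h1, h2, hii, Ne.symm hii]
    rw [h, Finset.sum_add_distrib]
    simp
  have hesum : ∑ j, e j = 0 := by
    have h : ∑ j, e j = ∑ j, ((if j = j1 then (1:ℝ) else 0) + (if j = j2 then -1 else 0)) := by
      refine Finset.sum_congr rfl fun j _ => ?_
      rcases eq_or_ne j j1 with h1 | h1 <;> rcases eq_or_ne j j2 with h2 | h2
      · exact absurd (h1.symm.trans h2) hjj
      all_goals simp [he, h1, h2, hjj, Ne.symm hjj]
    rw [h, Finset.sum_add_distrib]
    simp
  have hrow : ∀ i, ∑ j, r i j = p i := by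
    intro i
    have h1 : ∑ j, r i j = (∑ j, p i * q j) + ∑ j, ε * (c i * e j) := by
      simp only [hr]
      rw [Finset.sum_add_distrib]
    rw [h1, ← Finset.mul_sum, hqsum]
    have h2 : ∑ j, ε * (c i * e j) = ε * c i * ∑ j, e j := by
      rw [Finset.mul_sum]
      exact Finset.sum_congr rfl fun j _ => by ring
    rw [h2, hesum]
    ring
  have hcol : ∀ j, ∑ i, r i j = q j := by
    intro j
    simp only [hr]
    rw [Finset.sum_add_distrib]
    have h1 : ∑ i, p i * q j = (∑ i, p i) * q j := by rw [Finset.sum_mul]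
    have h2 : ∑ i, ε * (c i * e j) = ε * e j * ∑ i, c i := by
      rw [Finset.mul_sum]; exact Finset.sum_congr rfl fun i _ => by ring
    rw [h1, h2, hpsum, hcsum]
    ring
  have hεle : ∀ i j, (i = i1 ∨ i = i2) → (j = j1 ∨ j = j2) → ε ≤ p i * q j := by
    intro i j hi hj
    have h1 : min (p i1) (p i2) ≤ p i := by
      rcases hi with h | h
      · rw [h]; exact min_le_left _ _
      · rw [h]; exact min_le_right _ _
    have h2 : min (q j1) (q j2) ≤ q j := by
      rcases hj with h | h
      · rw [h]; exact min_le_left _ _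
      · rw [h]; exact min_le_right _ _
    exact mul_le_mul h1 h2 (le_of_lt (lt_min hqj1 hqj2)) (hpnn i)
  have hrnn : ∀ i j, 0 ≤ r i j := by
    intro i j
    simp only [hr]
    by_cases h1 : i = i1 ∨ i = i2
    · by_cases h2 : j = j1 ∨ j = j2
      · have := hεle i j h1 h2
        have hc1 : c i1 = 1 := by simp [hc]
        have hc2 : c i2 = -1 := by simp [hc, Ne.symm hii]
        have he1 : e j1 = 1 := by simp [he]
        have he2 : e j2 = -1 := by simp [he, Ne.symm hjj]
        have hce : c i * e j = 1 ∨ c i * e j = -1 := by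
          rcases h1 with h | h <;> rcases h2 with h' | h' <;> subst h <;> subst h'
          · left; rw [hc1, he1]; ring
          · right; rw [hc1, he2]; ring
          · right; rw [hc2, he1]; ring
          · left; rw [hc2, he2]; ring
        rcases hce with h | h <;> rw [h] <;> nlinarith [mul_nonneg (hpnn i) (hqnn j)]
      · have : e j = 0 := by push_neg at h2; simp [he, h2.1, h2.2]
        rw [this]
        nlinarith [mul_nonneg (hpnn i) (hqnn j)]
    · have : c i = 0 := by push_neg at h1; simp [hc, h1.1, h1.2]
      rw [this]
      nlinarith [mul_nonneg (hpnn i) (hqnn j)]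
  set W : m → n → Matrix (m × n) (m × n) ℂ :=
    fun i j => vecMulVec (tens (a i) (b j)) (star (tens (a i) (b j))) with hW
  refine ⟨∑ i, ∑ j, (r i j : ℂ) • W i j, ⟨posSemidef_iff_dotProduct_mulVec.mpr ⟨?_, ?_⟩, ?_⟩, ?_, ?_, ?_⟩
  · -- Hermitian
    show _ᴴ = _
    rw [conjTranspose_sum]
    refine Finset.sum_congr rfl fun i _ => ?_
    rw [conjTranspose_sum]
    refine Finset.sum_congr rfl fun j _ => ?_
    rw [conjTranspose_smul, hW, herm_outer (tens (a i) (b j))]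
    congr 1
    exact Complex.conj_ofReal _
  · -- nonneg quadratic form
    intro x
    rw [qf_sum]
    refine Finset.sum_nonneg fun i _ => ?_
    rw [qf_sum]
    refine Finset.sum_nonneg fun j _ => ?_
    rw [qf_smul, hW, qf_outer, star_dot]
    exact mul_nonneg (by exact_mod_cast hrnn i j) (star_mul_self_nonneg _)
  · -- trace
    rw [Matrix.trace_sum]
    have : ∀ i, ((∑ j, (r i j : ℂ) • W i j).trace) = (p i : ℂ) := by
      intro i
      rw [Matrix.trace_sum]
      have : ∀ j, ((r i j : ℂ) • W i j).trace = (r i j : ℂ) := by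
        intro j
        rw [Matrix.trace_smul, hW, trace_outer, dot_tens, ortho_col, ortho_col]
        simp
      rw [Finset.sum_congr rfl fun j _ => this j]
      rw [← Complex.ofReal_sum, hrow i]
    rw [Finset.sum_congr rfl fun i _ => this i, ← Complex.ofReal_sum, hpsum]
    simp
  · -- trB
    rw [trB_sum]
    have : ∀ i, trB (∑ j, (r i j : ℂ) • W i j) = (p i : ℂ) • vecMulVec (a i) (star (a i)) := by
      intro i
      rw [trB_sum]
      have h1 : ∀ j, trB ((r i j : ℂ) • W i j) = (r i j : ℂ) • vecMulVec (a i) (star (a i)) := by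
        intro j
        rw [trB_smul, hW, trB_outer, ortho_col]
        simp
      rw [Finset.sum_congr rfl fun j _ => h1 j, ← Finset.sum_smul, ← Complex.ofReal_sum, hrow i]
    rw [Finset.sum_congr rfl fun i _ => this i]
    exact (spectral_sum hA.1.1).symm
  · -- trA
    rw [trA_sum]
    have hswap : ∀ j, ∑ i, trA ((r i j : ℂ) • W i j) = (q j : ℂ) • vecMulVec (b j) (star (b j)) := by
      intro j
      have h1 : ∀ i, trA ((r i j : ℂ) • W i j) = (r i j : ℂ) • vecMulVec (b j) (star (b j)) := by
        intro i
        rw [trA_smul, hW, trA_outer, ortho_col]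
        simp
      rw [Finset.sum_congr rfl fun i _ => h1 i, ← Finset.sum_smul, ← Complex.ofReal_sum, hcol j]
    have : ∑ i, trA (∑ j, (r i j : ℂ) • W i j) = ∑ i, ∑ j, trA ((r i j : ℂ) • W i j) :=
      Finset.sum_congr rfl fun i _ => trA_sum _ _
    rw [this, Finset.sum_comm, Finset.sum_congr rfl fun j _ => hswap j]
    exact (spectral_sum hB.1.1).symm
  · -- not equal to product
    intro hEq
    have hprod : ρA ⊗ₖ ρB = ∑ i, ∑ j, ((p i : ℂ) * (q j : ℂ)) • W i j := by
      conv_lhs => rw [spectral_sum hA.1.1, spectral_sum hB.1.1]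
      rw [kron_sum_sum]
      exact Finset.sum_congr rfl fun i _ => Finset.sum_congr rfl fun j _ => by
        rw [hW, kron_outer]
    set x : m × n → ℂ := tens (a i1) (b j1) with hx
    have hqfW : ∀ i j, star x ⬝ᵥ (W i j).mulVec x
        = if i = i1 ∧ j = j1 then 1 else 0 := by
      intro i j
      rw [hW, qf_outer, hx, dot_tens, dot_tens, ortho_col, ortho_col, ortho_col, ortho_col]
      by_cases h1 : i = i1 <;> by_cases h2 : j = j1 <;>
        simp [h1, h2, eq_comm]
    have hqf : ∀ (s : m → n → ℝ), star x ⬝ᵥ ((∑ i, ∑ j, (s i j : ℂ) • W i j).mulVec x) = (s i1 j1 : ℂ) := by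
      intro s
      rw [qf_sum]
      have : ∀ i, star x ⬝ᵥ ((∑ j, (s i j : ℂ) • W i j).mulVec x)
          = if i = i1 then (s i j1 : ℂ) else 0 := by
        intro i
        rw [qf_sum]
        have : ∀ j, star x ⬝ᵥ (((s i j : ℂ) • W i j).mulVec x)
            = if i = i1 ∧ j = j1 then (s i j : ℂ) else 0 := by
          intro j
          rw [qf_smul, hqfW]
          by_cases h : i = i1 ∧ j = j1 <;> simp [h]
        rw [Finset.sum_congr rfl fun j _ => this j]
        by_cases h : i = i1 <;> simp [h]
      rw [Finset.sum_congr rfl fun i _ => this i]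
      simp
    have h1 : (r i1 j1 : ℂ) = (p i1 : ℂ) * (q j1 : ℂ) := by
      have e1 := hqf r
      have e2 := hqf (fun i j => p i * q j)
      push_cast at e2
      rw [hEq, hprod] at e1
      exact e1.symm.trans e2
    have hfin : r i1 j1 = p i1 * q j1 := by exact_mod_cast h1
    have hc1 : c i1 = 1 := by simp [hc]
    have he1 : e j1 = 1 := by simp [he]
    simp only [hr, hc1, he1, mul_one] at hfin
    linarith
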